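/- The module M_α of words of content α under the 0-Hecke action is cyclically generated by the sorted word 1^{α₁}2^{α₂}⋯m^{α_m}: every word of content α is obtained by applying some product of the operators π_i to the sorted word. -/

import Mathlib

/-- The 0-Hecke operator `π_{i+1}` on words `w : Fin n → ℕ`. -/
def heckeWord {n : ℕ} (i : Fin (n - 1)) (w : Fin n → ℕ) : Fin n → ℕ :=
  let p : Fin n := ⟨i, by have := i.isLt; omega⟩
  let q : Fin n := ⟨(i : ℕ) + 1, by have := i.isLt; omega⟩
  if w p < w q then w ∘ Equiv.swap p q else w

/-- A word has content `α`. -/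
def WordHasContent {n : ℕ} (c : Composition n) (w : Fin n → ℕ) : Prop :=
  (∀ p, 1 ≤ w p ∧ w p ≤ c.length) ∧
  ∀ j : Fin c.length,
    (Finset.univ.filter fun p => w p = (j : ℕ) + 1).card = c.blocksFun j

/-- The sorted word `1^{α₁} 2^{α₂} ⋯ m^{α_m}` of a composition `α` of `n`:
position `p` carries the (1-based) index of the block containing `p`. -/
def sortedWord {n : ℕ} (c : Composition n) : Fin n → ℕ :=
  fun p => (c.index p : ℕ) + 1


open Finset

/-- Counting function: number of positions with value ≤ t. -/
def wcnt {n : ℕ} (w : Fin n → ℕ) (t : ℕ) : ℕ :=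
  (Finset.univ.filter fun p => w p ≤ t).card

lemma wcnt_le_iff {n : ℕ} {u : Fin n → ℕ} (hu : Monotone u) (p : Fin n) (t : ℕ) :
    u p ≤ t ↔ (p : ℕ) < wcnt u t := by
  constructor
  · intro h
    have hsub : Finset.Iic p ⊆ Finset.univ.filter (fun q => u q ≤ t) := fun q hq =>
      Finset.mem_filter.2 ⟨Finset.mem_univ _, le_trans (hu (Finset.mem_Iic.1 hq)) h⟩
    have := Finset.card_le_card hsub
    rw [Fin.card_Iic] at this
    unfold wcnt; omega
  · intro h
    by_contra hc
    push_neg at hc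
    have hsub : Finset.univ.filter (fun q : Fin n => u q ≤ t) ⊆ Finset.Iio p := by
      intro q hq
      rw [Finset.mem_Iio]
      by_contra hq'
      push_neg at hq'
      exact absurd (le_trans (hu hq') (Finset.mem_filter.1 hq).2) (not_le.2 hc)
    have := Finset.card_le_card hsub
    rw [Fin.card_Iio] at this
    unfold wcnt at h; omega

lemma monotone_eq_of_wcnt {n : ℕ} {u v : Fin n → ℕ} (hu : Monotone u) (hv : Monotone v)
    (h : ∀ t, wcnt u t = wcnt v t) : u = v := by
  funext p
  have h1 : u p ≤ v p := by
    rw [wcnt_le_iff hu, h]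
    exact (wcnt_le_iff hv p (v p)).1 le_rfl
  have h2 : v p ≤ u p := by
    rw [wcnt_le_iff hv, ← h]
    exact (wcnt_le_iff hu p (u p)).1 le_rfl
  omega

lemma wcnt_of_content {n : ℕ} {c : Composition n} {w : Fin n → ℕ}
    (hw : WordHasContent c w) (t : ℕ) :
    wcnt w t = ∑ j ∈ Finset.univ.filter (fun j : Fin c.length => (j : ℕ) + 1 ≤ t),
      c.blocksFun j := by
  classical
  have hb : ∀ p, 1 ≤ w p ∧ w p ≤ c.length := hw.1
  have hf : ∀ p : Fin n, w p - 1 < c.length := fun p => by have := hb p; omega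
  set f : Fin n → Fin c.length := fun p => ⟨w p - 1, hf p⟩ with hfdef
  rw [wcnt, Finset.card_eq_sum_card_fiberwise
    (f := f) (t := Finset.univ.filter (fun j : Fin c.length => (j : ℕ) + 1 ≤ t)) ?_]
  · apply Finset.sum_congr rfl
    intro j hj
    rw [Finset.mem_filter] at hj
    rw [← hw.2 j]
    congr 1
    ext p
    simp only [Finset.mem_filter, Finset.mem_univ, true_and, hfdef, Fin.ext_iff]
    have := hb p
    constructor
    · rintro ⟨_, h2⟩; omega
    · intro h; omega
  · intro p hp
    rw [Finset.mem_coe, Finset.mem_filter] at hp ⊢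
    refine ⟨Finset.mem_univ _, ?_⟩
    have := hb p
    simp only [hfdef]
    omega

lemma sortedWord_monotone {n : ℕ} (c : Composition n) : Monotone (sortedWord c) := by
  intro p q hpq
  simp only [sortedWord, add_le_add_iff_right, Nat.succ_le_succ_iff]
  by_contra h
  push_neg at h
  have h1 : (c.index q : ℕ) + 1 ≤ (c.index p : ℕ) := h
  have h2 : (q : ℕ) < c.sizeUpTo ((c.index q : ℕ) + 1) := c.lt_sizeUpTo_index_succ q
  have h3 : c.sizeUpTo ((c.index q : ℕ) + 1) ≤ c.sizeUpTo (c.index p) :=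
    c.monotone_sizeUpTo h1
  have h4 : c.sizeUpTo (c.index p) ≤ (p : ℕ) := c.sizeUpTo_index_le p
  have : (p : ℕ) ≤ (q : ℕ) := hpq
  omega

lemma index_eq_iff {n : ℕ} (c : Composition n) (p : Fin n) (j : Fin c.length) :
    c.index p = j ↔ c.sizeUpTo j ≤ (p : ℕ) ∧ (p : ℕ) < c.sizeUpTo ((j : ℕ) + 1) := by
  rw [eq_comm, ← Composition.mem_range_embedding_iff' (c := c), Composition.mem_range_embedding_iff]

lemma sortedWord_content {n : ℕ} (c : Composition n) : WordHasContent c (sortedWord c) := by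
  constructor
  · intro p
    simp only [sortedWord]
    have := (c.index p).isLt
    omega
  · intro j
    have hcard : (Finset.univ.filter fun p : Fin n => sortedWord c p = (j : ℕ) + 1)
        = Finset.univ.filter fun p : Fin n =>
            c.sizeUpTo j ≤ (p : ℕ) ∧ (p : ℕ) < c.sizeUpTo ((j : ℕ) + 1) := by
      ext p
      simp only [Finset.mem_filter, Finset.mem_univ, true_and, sortedWord,
        add_left_inj, ← index_eq_iff c p j, Fin.ext_iff]
    rw [hcard]
    have hle : c.sizeUpTo ((j : ℕ) + 1) ≤ n := by
      exact c.sizeUpTo_le _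
    have : (Finset.univ.filter fun p : Fin n =>
        c.sizeUpTo j ≤ (p : ℕ) ∧ (p : ℕ) < c.sizeUpTo ((j : ℕ) + 1)).card
        = (Finset.Ico (c.sizeUpTo j) (c.sizeUpTo ((j : ℕ) + 1))).card := by
      refine Finset.card_bij (fun p _ => (p : ℕ)) ?_ ?_ ?_
      · intro p hp
        rw [Finset.mem_filter] at hp
        rw [Finset.mem_Ico]
        exact hp.2
      · intro a ha b hb hab
        exact Fin.ext hab
      · intro b hb
        rw [Finset.mem_Ico] at hb
        exact ⟨⟨b, lt_of_lt_of_le hb.2 hle⟩, Finset.mem_filter.2 ⟨Finset.mem_univ _, hb⟩, rfl⟩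
    rw [this, Nat.card_Ico, c.sizeUpTo_succ' j]
    omega

lemma monotone_of_no_descent {n : ℕ} (v : Fin n → ℕ)
    (hmono : ∀ i : Fin (n - 1),
      v ⟨(i : ℕ), by have := i.isLt; omega⟩ ≤ v ⟨(i : ℕ) + 1, by have := i.isLt; omega⟩) :
    Monotone v := by
  have key : ∀ k (a b : Fin n), (b : ℕ) = (a : ℕ) + k → v a ≤ v b := by
    intro k
    induction k with
    | zero =>
      intro a b h
      have : a = b := Fin.ext (by omega)
      rw [this]
    | succ k ih =>
      intro a b h
      have hb : (a : ℕ) + k < n := by have := b.isLt; omega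
      have hlt : (a : ℕ) + k < n - 1 := by have := b.isLt; omega
      have h1 : v a ≤ v ⟨(a : ℕ) + k, hb⟩ := ih a _ rfl
      have h2 := hmono ⟨(a : ℕ) + k, hlt⟩
      have hbeq : b = ⟨(a : ℕ) + k + 1, by omega⟩ :=
        Fin.ext (by show (b : ℕ) = (a : ℕ) + k + 1; omega)
      rw [hbeq]
      exact le_trans h1 h2
  intro a b hab
  exact key ((b : ℕ) - (a : ℕ)) a b (by have : (a : ℕ) ≤ b := hab; omega)

lemma swap_content {n : ℕ} (c : Composition n) (v : Fin n → ℕ) (hv : WordHasContent c v)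
    (p q : Fin n) : WordHasContent c (v ∘ Equiv.swap p q) := by
  classical
  constructor
  · intro r; exact hv.1 _
  · intro j
    rw [← hv.2 j]
    refine Finset.card_bij (fun r _ => Equiv.swap p q r) ?_ ?_ ?_
    · intro r hr
      rw [Finset.mem_filter] at hr ⊢
      exact ⟨Finset.mem_univ _, hr.2⟩
    · intro a _ b _ h
      exact (Equiv.swap p q).injective h
    · intro b hb
      rw [Finset.mem_filter] at hb
      refine ⟨Equiv.swap p q b, Finset.mem_filter.2 ⟨Finset.mem_univ _, ?_⟩,
        Equiv.swap_apply_self _ _ _⟩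
      show v (Equiv.swap p q (Equiv.swap p q b)) = (j : ℕ) + 1
      rw [Equiv.swap_apply_self]
      exact hb.2

lemma swap_sum_lt {n : ℕ} (v : Fin n → ℕ) (p q : Fin n)
    (hq : (q : ℕ) = (p : ℕ) + 1) (hlt : v q < v p) :
    (∑ r : Fin n, (r : ℕ) * v r) < ∑ r : Fin n, (r : ℕ) * (v ∘ Equiv.swap p q) r := by
  classical
  have hpq : p ≠ q := by intro h; rw [h] at hq; omega
  have hre : (∑ r : Fin n, ((Equiv.swap p q r : Fin n) : ℕ) * v r)
      = ∑ r : Fin n, (r : ℕ) * (v ∘ Equiv.swap p q) r := by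
    refine Fintype.sum_equiv (Equiv.swap p q)
      (fun s => ((Equiv.swap p q s : Fin n) : ℕ) * v s)
      (fun r => (r : ℕ) * (v ∘ Equiv.swap p q) r) ?_
    intro s
    show ((Equiv.swap p q s : Fin n) : ℕ) * v s
        = ((Equiv.swap p q s : Fin n) : ℕ) * v (Equiv.swap p q (Equiv.swap p q s))
    rw [Equiv.swap_apply_self]
  rw [← hre]
  have hqmem : q ∈ Finset.univ.erase p :=
    Finset.mem_erase.2 ⟨Ne.symm hpq, Finset.mem_univ _⟩
  have split : ∀ f : Fin n → ℕ, (∑ r : Fin n, f r)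
      = f p + (f q + ∑ r ∈ (Finset.univ.erase p).erase q, f r) := by
    intro f
    rw [Finset.add_sum_erase _ f hqmem, Finset.add_sum_erase _ f (Finset.mem_univ p)]
  rw [split (fun r => (r : ℕ) * v r),
    split (fun r => ((Equiv.swap p q r : Fin n) : ℕ) * v r)]
  have hrest : (∑ r ∈ (Finset.univ.erase p).erase q, (r : ℕ) * v r)
      = ∑ r ∈ (Finset.univ.erase p).erase q,
          ((Equiv.swap p q r : Fin n) : ℕ) * v r := by
    refine Finset.sum_congr rfl ?_
    intro r hr
    rw [Finset.mem_erase, Finset.mem_erase] at hr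
    rw [Equiv.swap_apply_of_ne_of_ne hr.2.1 hr.1]
  rw [hrest]
  have e0 : ((Equiv.swap p q p : Fin n) : ℕ) = (q : ℕ) := by
    rw [Equiv.swap_apply_left]
  have e0' : ((Equiv.swap p q q : Fin n) : ℕ) = (p : ℕ) := by
    rw [Equiv.swap_apply_right]
  rw [e0, e0']
  have e1 : (q : ℕ) * v p = (p : ℕ) * v p + v p := by rw [hq]; ring
  have e2 : (q : ℕ) * v q = (p : ℕ) * v q + v q := by rw [hq]; ring
  omega

lemma hecke_descent {n : ℕ} (c : Composition n) (v : Fin n → ℕ) (hv : WordHasContent c v)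
    (i : Fin (n - 1))
    (hi : v ⟨(i : ℕ) + 1, by have := i.isLt; omega⟩ < v ⟨(i : ℕ), by have := i.isLt; omega⟩) :
    ∃ v' : Fin n → ℕ, WordHasContent c v' ∧ heckeWord i v' = v ∧
      (∑ r : Fin n, (r : ℕ) * v r) < ∑ r : Fin n, (r : ℕ) * v' r := by
  refine ⟨v ∘ Equiv.swap ⟨(i : ℕ), by have := i.isLt; omega⟩
      ⟨(i : ℕ) + 1, by have := i.isLt; omega⟩, swap_content c v hv _ _, ?_, ?_⟩
  · show (if (v ∘ Equiv.swap _ _) _ < (v ∘ Equiv.swap _ _) _ then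
        (v ∘ Equiv.swap _ _) ∘ Equiv.swap _ _ else (v ∘ Equiv.swap _ _)) = v
    rw [if_pos]
    · funext x
      show v (Equiv.swap _ _ (Equiv.swap _ _ x)) = v x
      rw [Equiv.swap_apply_self]
    · show v (Equiv.swap _ _ _) < v (Equiv.swap _ _ _)
      rw [Equiv.swap_apply_left, Equiv.swap_apply_right]
      exact hi
  · exact swap_sum_lt v _ _ rfl hi

/-- The module `M_α` of words of content `α` is cyclically generated by the sorted
word `1^{α₁} 2^{α₂} ⋯ m^{α_m}`: every word of content `α` is obtained from it by
applying some product of the operators `π_i`. -/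
theorem words_cyclically_generated (n : ℕ) (c : Composition n) (w : Fin n → ℕ)
    (hw : WordHasContent c w) :
    ∃ l : List (Fin (n - 1)),
      l.foldl (fun v i => heckeWord i v) (sortedWord c) = w := by
  classical
  have hMle : ∀ v : Fin n → ℕ, WordHasContent c v →
      (∑ p : Fin n, (p : ℕ) * v p) ≤ (∑ p : Fin n, (p : ℕ)) * c.length := by
    intro v hv
    rw [Finset.sum_mul]
    exact Finset.sum_le_sum fun p _ => Nat.mul_le_mul_left _ (hv.1 p).2
  suffices H : ∀ N (v : Fin n → ℕ), WordHasContent c v →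
      (∑ p : Fin n, (p : ℕ)) * c.length - (∑ p : Fin n, (p : ℕ) * v p) = N →
      ∃ l : List (Fin (n - 1)),
        l.foldl (fun v i => heckeWord i v) (sortedWord c) = v from H _ w hw rfl
  intro N
  induction N using Nat.strong_induction_on with
  | _ N IH =>
  intro v hv hN
  by_cases hmono : ∀ i : Fin (n - 1),
      v ⟨(i : ℕ), by have := i.isLt; omega⟩ ≤ v ⟨(i : ℕ) + 1, by have := i.isLt; omega⟩
  · have hvm : Monotone v := monotone_of_no_descent v hmono
    have hveq : v = sortedWord c :=
      (monotone_eq_of_wcnt (sortedWord_monotone c) hvm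
        (fun t => by rw [wcnt_of_content (sortedWord_content c), wcnt_of_content hv])).symm
    exact ⟨[], hveq.symm⟩
  · push_neg at hmono
    obtain ⟨i, hi⟩ := hmono
    obtain ⟨v', hv'content, hstep, hM⟩ := hecke_descent c v hv i hi
    have hMle' := hMle v' hv'content
    have hMle'' := hMle v hv
    obtain ⟨l, hl⟩ := IH ((∑ p : Fin n, (p : ℕ)) * c.length - ∑ r : Fin n, (r : ℕ) * v' r)
      (by omega) v' hv'content rfl
    refine ⟨l ++ [i], ?_⟩
    rw [List.foldl_append, hl]
    exact hstep
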